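/- arXiv:1003.2588 — 2 statements merged into one kernel-verified Lean document; each statement's English description precedes it below -/
import Mathlib

section
/- Let n ≥ 1. A subset S ⊆ ℝ^{n+1} is T-shaped if and only if there exist hyperplanes H₁,…,H_n in ℝ^{n+1} in general position such that S ⊆ H₁ ∪ ⋯ ∪ H_n and for each i with 1 ≤ i ≤ n, the hyperplane H_i does not separate the set S \ (H₁ ∪ ⋯ ∪ H_{i−1}). -/
/-- The set `T_n ⊆ ℝⁿ`, with `T_0 = ∅` and `T_{n+1} = (ℝⁿ × {0}) ∪ (T_n × ℝ₊)`. -/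
def Tset : (n : ℕ) → Set (Fin n → ℝ)
  | 0 => ∅
  | n + 1 =>
      {x | x (Fin.last n) = 0 ∨
        ((fun i : Fin n => x i.castSucc) ∈ Tset n ∧ 0 ≤ x (Fin.last n))}

/-- `S ⊆ ℝ^{n+1}` is T-shaped if some invertible affine transformation maps it
into `ℝ × T_n`. -/
def IsTShaped (n : ℕ) (S : Set (Fin (n + 1) → ℝ)) : Prop :=
  ∃ f : (Fin (n + 1) → ℝ) ≃ᵃ[ℝ] (Fin (n + 1) → ℝ),
    ∀ x ∈ S, (fun i : Fin n => f x i.succ) ∈ Tset n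

lemma tset_iff : ∀ (n : ℕ) (y : Fin n → ℝ),
    y ∈ Tset n ↔ ∃ p : Fin n, y p = 0 ∧ ∀ q, p < q → 0 ≤ y q := by
  intro n
  induction n with
  | zero =>
      intro y
      simp only [Tset, Set.mem_empty_iff_false, false_iff]
      rintro ⟨p, -⟩; exact p.elim0
  | succ n ih =>
      intro y
      show (y (Fin.last n) = 0 ∨ _) ↔ _
      constructor
      · rintro (h | ⟨h1, h2⟩)
        · exact ⟨Fin.last n, h, fun q hq => absurd hq (not_lt.2 (Fin.le_last q))⟩
        · obtain ⟨p, hp0, hp⟩ := (ih _).1 h1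
          refine ⟨p.castSucc, hp0, ?_⟩
          intro q hq
          rcases Fin.eq_castSucc_or_eq_last q with ⟨q', rfl⟩ | rfl
          · exact hp q' (by exact_mod_cast hq)
          · exact h2
      · rintro ⟨p, hp0, hp⟩
        rcases Fin.eq_castSucc_or_eq_last p with ⟨p', rfl⟩ | rfl
        · refine Or.inr ⟨(ih _).2 ⟨p', hp0, fun q hq => hp q.castSucc (by exact_mod_cast hq)⟩, ?_⟩
          exact hp (Fin.last n) (Fin.castSucc_lt_last p')
        · exact Or.inl hp0

/-- Characterization of T-shaped sets: `S ⊆ ℝ^{n+1}` (with `n ≥ 1`) is T-shaped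
iff there are hyperplanes `H₁, …, H_n` (given by normals `v i ≠ 0`, in general
position, i.e. with linearly independent normals, which makes them pairwise
distinct) and constants `c i`, such that `S ⊆ H₁ ∪ ⋯ ∪ H_n` and each `H i` does
not separate `S \ (H₁ ∪ ⋯ ∪ H_{i-1})` (that set lies in one of the two closed
half-spaces bounded by `H i`). -/
theorem isTShaped_iff_hyperplanes (n : ℕ) (hn : 1 ≤ n)
    (S : Set (Fin (n + 1) → ℝ)) :
    IsTShaped n S ↔
      ∃ (v : Fin n → (Fin (n + 1) → ℝ)) (c : Fin n → ℝ),
        LinearIndependent ℝ v ∧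
        (∀ x ∈ S, ∃ i, (∑ j, v i j * x j) = c i) ∧
        (∀ i : Fin n,
          (∀ x ∈ S, (∀ j, j < i → (∑ l, v j l * x l) ≠ c j) →
            (∑ l, v i l * x l) ≤ c i) ∨
          (∀ x ∈ S, (∀ j, j < i → (∑ l, v j l * x l) ≠ c j) →
            c i ≤ (∑ l, v i l * x l))) := by
  constructor
  · intro h
    classical
    obtain ⟨f, hf⟩ := h
    set K : Fin n → Fin (n + 1) := fun i => (Fin.rev i).succ with hK
    have hKinj : Function.Injective K := fun a b h =>
      Fin.rev_injective (Fin.succ_injective _ h)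
    set v : Fin n → (Fin (n + 1) → ℝ) := fun i j => f.linear (Pi.single j 1) (K i) with hv
    set c : Fin n → ℝ := fun i => -(f 0 (K i)) with hc
    have hsingle : ∀ x : Fin (n + 1) → ℝ, x = ∑ j, x j • (Pi.single j 1 : Fin (n + 1) → ℝ) := by
      intro x; funext k
      simp [Pi.single_apply, Finset.sum_ite_eq', mul_comm]
    have key : ∀ (x : Fin (n + 1) → ℝ) (i : Fin n),
        ∑ j, v i j * x j = f.linear x (K i) := by
      intro x i
      calc ∑ j, v i j * x j = ∑ j, (x j • f.linear ((Pi.single j 1 : Fin (n + 1) → ℝ))) (K i) := by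
            simp [hv, mul_comm, smul_eq_mul]
        _ = (∑ j, x j • f.linear ((Pi.single j 1 : Fin (n + 1) → ℝ))) (K i) := by
            rw [Finset.sum_apply]
        _ = f.linear (∑ j, x j • (Pi.single j 1 : Fin (n + 1) → ℝ)) (K i) := by
            rw [map_sum]
            simp_rw [map_smul]
        _ = f.linear x (K i) := by rw [← hsingle x]
    have hdec : ∀ x : Fin (n + 1) → ℝ, f x = f.linear x + f 0 := by
      intro x
      have := f.map_vadd 0 x
      simpa using this
    refine ⟨v, c, ?_, ?_, ?_⟩
    · rw [Fintype.linearIndependent_iff]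
      intro a ha i
      have h1 : ∀ j, ∑ i', a i' * v i' j = 0 := by
        intro j
        have := congrFun ha j
        simpa [Finset.sum_apply] using this
      have h2 : ∀ x : Fin (n + 1) → ℝ, ∑ i', a i' * f.linear x (K i') = 0 := by
        intro x
        have hcalc : ∑ i', a i' * ∑ j, v i' j * x j = 0 := by
          calc ∑ i', a i' * ∑ j, v i' j * x j
              = ∑ j, (∑ i', a i' * v i' j) * x j := by
                simp_rw [Finset.mul_sum, Finset.sum_mul]
                rw [Finset.sum_comm]
                simp_rw [mul_assoc]
            _ = 0 := by simp [h1]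
        simpa only [key] using hcalc
      have h3 := h2 (f.linear.symm (Pi.single (K i) 1))
      rw [show (f.linear (f.linear.symm (Pi.single (K i) (1:ℝ)))) = Pi.single (K i) 1 from
        f.linear.apply_symm_apply _] at h3
      simpa [Pi.single_apply, hKinj.eq_iff, Finset.sum_ite_eq'] using h3
    · intro x hx
      obtain ⟨p, hp0, -⟩ := (tset_iff n _).1 (hf x hx)
      refine ⟨Fin.rev p, ?_⟩
      have hKp : K (Fin.rev p) = p.succ := by simp [hK, Fin.rev_rev]
      rw [key, hKp]
      show f.linear x p.succ = -f 0 (K (Fin.rev p))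
      rw [hKp]
      have := congrFun (hdec x) p.succ
      simp only [Pi.add_apply] at this
      have hfx : f x p.succ = 0 := hp0
      linarith
    · intro i
      right
      intro x hx hj
      obtain ⟨p0, hp00, hp0⟩ := (tset_iff n _).1 (hf x hx)
      have hy : ∀ q, Fin.rev i < q → f x q.succ ≠ 0 := by
        intro q hq
        have hlt : Fin.rev q < i := by
          conv_rhs => rw [← Fin.rev_rev i]
          exact Fin.rev_lt_rev.mpr hq
        have hne := hj (Fin.rev q) hlt
        rw [key] at hne
        have hKq : K (Fin.rev q) = q.succ := by simp [hK, Fin.rev_rev]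
        have hne' : f.linear x q.succ ≠ -f 0 q.succ := by simpa [hc, hKq] using hne
        intro h0
        apply hne'
        have := congrFun (hdec x) q.succ
        simp only [Pi.add_apply] at this
        linarith
      have h0 : (0:ℝ) ≤ f x (Fin.rev i).succ := by
        rcases lt_trichotomy p0 (Fin.rev i) with hlt | heq | hgt
        · exact hp0 _ hlt
        · rw [← heq]; exact le_of_eq hp00.symm
        · exact absurd hp00 (hy p0 hgt)
      rw [key]
      show -f 0 (K i) ≤ f.linear x (K i)
      have := congrFun (hdec x) (K i)
      simp only [Pi.add_apply] at this
      have hKi : K i = (Fin.rev i).succ := rfl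
      rw [hKi] at this
      linarith
  · rintro ⟨v, c, hli, hcov, hside⟩
    classical
    set ε : Fin n → ℝ := fun i =>
      if (∀ x ∈ S, (∀ j, j < i → (∑ l, v j l * x l) ≠ c j) →
          (∑ l, v i l * x l) ≤ c i) then -1 else 1 with hε
    have hεunit : ∀ i, ε i = -1 ∨ ε i = 1 := by
      intro i
      by_cases hb : (∀ x ∈ S, (∀ j, j < i → (∑ l, v j l * x l) ≠ c j) →
          (∑ l, v i l * x l) ≤ c i)
      · left; simp only [hε]; rw [if_pos hb]
      · right; simp only [hε]; rw [if_neg hb]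
    have hεpos : ∀ i, ∀ x ∈ S, (∀ j, j < i → (∑ l, v j l * x l) ≠ c j) →
        0 ≤ ε i * ((∑ l, v i l * x l) - c i) := by
      intro i x hx hj
      by_cases hb : (∀ x ∈ S, (∀ j, j < i → (∑ l, v j l * x l) ≠ c j) →
          (∑ l, v i l * x l) ≤ c i)
      · have h1 := hb x hx hj
        simp only [hε, if_pos hb]
        nlinarith
      · have h1 := ((hside i).resolve_left hb) x hx hj
        simp only [hε, if_neg hb]
        nlinarith
    -- scaled family
    set v' : Fin n → (Fin (n + 1) → ℝ) := fun i => ε i • v i with hv'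
    have hli' : LinearIndependent ℝ v' := by
      have h := hli.units_smul (fun i => if ε i = -1 then (-1 : ℝˣ) else 1)
      convert h using 1
      funext i
      rcases hεunit i with h1 | h1 <;> simp [hv', h1, Pi.smul_apply'] <;> norm_num
    -- a vector outside the span
    have hspan_ne : Submodule.span ℝ (Set.range v') ≠ ⊤ := by
      intro htop
      have h1 : Module.finrank ℝ (Submodule.span ℝ (Set.range v')) = n := by
        rw [finrank_span_eq_card hli']
        simp
      rw [htop] at h1
      rw [finrank_top] at h1
      simp [Module.finrank_fin_fun] at h1
    obtain ⟨w, hw⟩ : ∃ w, w ∉ Submodule.span ℝ (Set.range v') := by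
      by_contra h
      push_neg at h
      exact hspan_ne (Submodule.eq_top_iff'.2 h)
    -- the full family
    set u : Fin (n + 1) → (Fin (n + 1) → ℝ) :=
      Fin.cons w (fun p => v' (Fin.rev p)) with hu
    have hliu : LinearIndependent ℝ u := by
      have htail : LinearIndependent ℝ (fun p : Fin n => v' (Fin.rev p)) :=
        hli'.comp Fin.rev Fin.rev_injective
      have hrange : Set.range (fun p : Fin n => v' (Fin.rev p)) = Set.range v' := by
        ext y
        constructor
        · rintro ⟨p, rfl⟩; exact ⟨Fin.rev p, rfl⟩
        · rintro ⟨i, rfl⟩; exact ⟨Fin.rev i, by simp [Fin.rev_rev]⟩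
      refine htail.fin_cons ?_
      rw [hrange]
      exact hw
    have hcard : Fintype.card (Fin (n + 1)) = Module.finrank ℝ (Fin (n + 1) → ℝ) := by
      simp [Module.finrank_fin_fun]
    have hspan_top : Submodule.span ℝ (Set.range u) = ⊤ := by
      have hB := (basisOfLinearIndependentOfCardEqFinrank hliu hcard).span_eq
      rwa [coe_basisOfLinearIndependentOfCardEqFinrank] at hB
    -- the linear map
    set g : (Fin (n + 1) → ℝ) →ₗ[ℝ] (Fin (n + 1) → ℝ) := (Matrix.of u).mulVecLin with hg
    have hgapp : ∀ (x : Fin (n + 1) → ℝ) (k : Fin (n + 1)),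
        g x k = ∑ j, u k j * x j := by
      intro x k
      simp [hg, Matrix.mulVecLin_apply, Matrix.mulVec, dotProduct]
    have hker : ∀ x, g x = 0 → x = 0 := by
      intro x hx0
      have hdot : ∀ k, ∑ j, u k j * x j = 0 := by
        intro k
        have := congrFun hx0 k
        rwa [hgapp] at this
      have hall : ∀ y, y ∈ Submodule.span ℝ (Set.range u) → ∑ j, y j * x j = 0 := by
        intro y hy
        induction hy using Submodule.span_induction with
        | mem y hy => obtain ⟨k, rfl⟩ := hy; exact hdot k
        | zero => simp
        | add a b _ _ ha hb =>
            simp only [Pi.add_apply, add_mul, Finset.sum_add_distrib, ha, hb, add_zero]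
        | smul r a _ ha =>
            simp only [Pi.smul_apply, smul_eq_mul, mul_assoc, ← Finset.mul_sum, ha, mul_zero]
      funext j
      have := hall (Pi.single j 1) (hspan_top ▸ Submodule.mem_top)
      simpa [Pi.single_apply, Finset.sum_ite_eq'] using this
    have hginj : Function.Injective g :=
      LinearMap.ker_eq_bot.mp (LinearMap.ker_eq_bot'.mpr hker)
    set gE : (Fin (n + 1) → ℝ) ≃ₗ[ℝ] (Fin (n + 1) → ℝ) :=
      LinearEquiv.ofInjectiveEndo g hginj with hgE
    set t : Fin (n + 1) → ℝ :=
      Fin.cons 0 (fun p => -(ε (Fin.rev p) * c (Fin.rev p))) with ht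
    refine ⟨gE.toAffineEquiv.trans (AffineEquiv.constVAdd ℝ (Fin (n + 1) → ℝ) t), ?_⟩
    intro x hx
    have hFcoord : ∀ p : Fin n,
        (gE.toAffineEquiv.trans (AffineEquiv.constVAdd ℝ (Fin (n + 1) → ℝ) t)) x p.succ =
          ε (Fin.rev p) * ((∑ j, v (Fin.rev p) j * x j) - c (Fin.rev p)) := by
      intro p
      have h1 : (gE.toAffineEquiv.trans (AffineEquiv.constVAdd ℝ (Fin (n + 1) → ℝ) t)) x p.succ
          = t p.succ + g x p.succ := by
        simp [AffineEquiv.trans_apply, AffineEquiv.constVAdd_apply, hgE,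
          LinearEquiv.ofInjectiveEndo]
        rfl
      rw [h1, hgapp]
      simp only [ht, hu, Fin.cons_succ, hv', Pi.smul_apply, smul_eq_mul]
      rw [mul_sub, Finset.mul_sum]
      simp_rw [mul_assoc]
      ring
    rw [tset_iff]
    -- minimal index
    set s : Finset (Fin n) := Finset.univ.filter (fun i => (∑ j, v i j * x j) = c i) with hs
    have hne : s.Nonempty := by
      obtain ⟨i, hi⟩ := hcov x hx
      exact ⟨i, by simp [hs, hi]⟩
    set i0 : Fin n := s.min' hne with hi0
    have hi0mem : (∑ j, v i0 j * x j) = c i0 := by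
      have := s.min'_mem hne
      simpa [hs] using this
    have hqual : ∀ j, j < i0 → (∑ l, v j l * x l) ≠ c j := by
      intro j hj heq
      have : i0 ≤ j := s.min'_le j (by simp [hs, heq])
      exact absurd hj (not_lt.2 this)
    refine ⟨Fin.rev i0, ?_, ?_⟩
    · show (gE.toAffineEquiv.trans (AffineEquiv.constVAdd ℝ (Fin (n + 1) → ℝ) t)) x
        (Fin.rev i0).succ = 0
      rw [hFcoord, Fin.rev_rev, hi0mem]
      ring
    · intro q hq
      show (0:ℝ) ≤ (gE.toAffineEquiv.trans (AffineEquiv.constVAdd ℝ (Fin (n + 1) → ℝ) t)) x q.succ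
      rw [hFcoord]
      have hlt : Fin.rev q < i0 := by
        conv_rhs => rw [← Fin.rev_rev i0]
        exact Fin.rev_lt_rev.mpr hq
      exact hεpos (Fin.rev q) x hx (fun j hj => hqual j (hj.trans hlt))
end

section
/- Let G be an abelian topological group, k ≥ 2, and C ⊆ G a k-centerpole subset of G. Then C is k-centerpole in the subgroup H = ⟨C⟩ + G[2], where ⟨C⟩ is the subgroup generated by C and G[2] = {x ∈ G : 2x = 0}. -/
/-- A subset `B` of a topological additive group is totally bounded if every
neighborhood `U` of `0` admits finitely many translates covering `B`. -/
def IsTotBounded {G : Type*} [AddGroup G] [TopologicalSpace G] (B : Set G) : Prop :=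
  ∀ U ∈ nhds (0 : G), ∃ F : Set G, F.Finite ∧ B ⊆ ⋃ x ∈ F, (fun u => x + u) '' U

/-- `C ⊆ G` is `k`-centerpole: every `k`-coloring of `G` admits an unbounded
monochromatic subset `S` symmetric with respect to some `c ∈ C`, i.e.
`S = 2c - S`. -/
def IsCenterpole {G : Type*} [AddCommGroup G] [TopologicalSpace G]
    (k : ℕ) (C : Set G) : Prop :=
  ∀ χ : G → Fin k, ∃ c ∈ C, ∃ S : Set G,
    (∃ i : Fin k, ∀ x ∈ S, χ x = i) ∧ ¬ IsTotBounded S ∧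
    S = (fun x => c + c - x) '' S

/-- The Boolean subgroup `G[2] = {x ∈ G : 2x = 0}`. -/
def boolSubgroup (G : Type*) [AddCommGroup G] : AddSubgroup G where
  carrier := {x | x + x = 0}
  zero_mem' := by simp
  add_mem' := by
    intro a b ha hb
    simp only [Set.mem_setOf_eq] at *
    rw [show a + b + (a + b) = (a + a) + (b + b) by abel, ha, hb, add_zero]
  neg_mem' := by
    intro a ha
    simp only [Set.mem_setOf_eq] at *
    rw [← neg_add, ha, neg_zero]

/-- In any abelian group there is a two-coloring separating `q` from `-q`
whenever they are distinct. -/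
theorem exists_neg_sep (Q : Type*) [AddCommGroup Q] :
    ∃ g : Q → Bool, ∀ q : Q, q ≠ -q → g q ≠ g (-q) := by
  classical
  let r : Setoid Q :=
    ⟨fun a b => a = b ∨ a = -b, by
      constructor
      · intro a; exact Or.inl rfl
      · intro a b h
        rcases h with h | h
        · exact Or.inl h.symm
        · exact Or.inr (by rw [h, neg_neg])
      · intro a b c hab hbc
        rcases hab with h | h <;> rcases hbc with h' | h'
        · exact Or.inl (h.trans h')
        · exact Or.inr (h.trans h')
        · exact Or.inr (by rw [h, h'])
        · exact Or.inl (by rw [h, h', neg_neg])⟩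
  refine ⟨fun q => decide (q = (Quotient.mk r q).out), ?_⟩
  intro q hq
  have hmk : Quotient.mk r (-q) = Quotient.mk r q := Quotient.sound (Or.inr rfl)
  have hout : (Quotient.mk r q).out = q ∨ (Quotient.mk r q).out = -q :=
    Quotient.exact (Quotient.out_eq (Quotient.mk r q))
  simp only [hmk]
  rcases hout with h | h
  · simp [h, hq, Ne.symm hq]
  · simp [h, hq]

/-- If `C` is `k`-centerpole (with `k ≥ 2`) in an abelian topological group
`G`, then `C` is `k`-centerpole in the subgroup `H = ⟨C⟩ + G[2]` (with its
subspace topology). -/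
theorem centerpole_in_generated_subgroup {G : Type*} [AddCommGroup G]
    [TopologicalSpace G] [IsTopologicalAddGroup G] (k : ℕ) (hk : 2 ≤ k)
    (C : Set G) (hC : IsCenterpole k C) :
    IsCenterpole k
      ((Subtype.val ⁻¹' C) :
        Set ((AddSubgroup.closure C ⊔ boolSubgroup G : AddSubgroup G))) := by
  classical
  set H : AddSubgroup G := AddSubgroup.closure C ⊔ boolSubgroup G with hHdef
  intro χ
  -- The subgroup 2⟨C⟩
  let N : AddSubgroup G :=
    { carrier := {x | ∃ a ∈ AddSubgroup.closure C, a + a = x}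
      zero_mem' := ⟨0, zero_mem _, add_zero 0⟩
      add_mem' := by
        rintro x y ⟨a, ha, rfl⟩ ⟨b, hb, rfl⟩
        exact ⟨a + b, add_mem ha hb, by abel⟩
      neg_mem' := by
        rintro x ⟨a, ha, rfl⟩
        exact ⟨-a, neg_mem ha, by abel⟩ }
  obtain ⟨g, hg⟩ := exists_neg_sep (G ⧸ N)
  -- If x ∉ H then 2x ∉ N
  have key : ∀ x : G, x ∉ H → x + x ∉ N := by
    intro x hx hmem
    obtain ⟨a, ha, hax⟩ := hmem
    apply hx
    have hb : x - a ∈ boolSubgroup G := by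
      show (x - a) + (x - a) = 0
      have h1 : (x - a) + (x - a) = (x + x) - (a + a) := by abel
      rw [h1, hax, sub_self]
    have hxeq : a + (x - a) = x := by abel
    rw [hHdef, ← hxeq]
    exact add_mem (AddSubgroup.mem_sup_left ha) (AddSubgroup.mem_sup_right hb)
  let f0 : Fin k := ⟨0, by omega⟩
  let f1 : Fin k := ⟨1, by omega⟩
  have hf01 : f0 ≠ f1 := by
    intro h
    simp [f0, f1, Fin.ext_iff] at h
  let χ' : G → Fin k := fun x =>
    if h : x ∈ H then χ ⟨x, h⟩
    else if g (QuotientAddGroup.mk x) then f0 else f1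
  obtain ⟨c, hcC, S, ⟨i, hmono⟩, hnb, hsym⟩ := hC χ'
  have hcH : c ∈ H := AddSubgroup.mem_sup_left (AddSubgroup.subset_closure hcC)
  -- S is closed under the symmetry
  have hinv : ∀ x ∈ S, c + c - x ∈ S := by
    intro x hx
    have hx' : x ∈ (fun x => c + c - x) '' S := hsym ▸ hx
    obtain ⟨y, hy, hyx⟩ := hx'
    have h2 : c + c - x = y := by rw [← hyx]; exact sub_sub_cancel _ _
    rwa [h2]
  -- S ⊆ H
  have hSH : S ⊆ (H : Set G) := by
    intro x hx
    by_contra hxH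
    have hyS := hinv x hx
    have hyH : c + c - x ∉ H := by
      intro hy
      apply hxH
      have h3 : x = (c + c) - (c + c - x) := by abel
      rw [h3]
      exact sub_mem (add_mem hcH hcH) hy
    have h1 := hmono x hx
    have h2 := hmono _ hyS
    have hN2c : (QuotientAddGroup.mk (c + c) : G ⧸ N) = 0 :=
      (QuotientAddGroup.eq_zero_iff _).mpr ⟨c, AddSubgroup.subset_closure hcC, rfl⟩
    have hq : (QuotientAddGroup.mk (c + c - x) : G ⧸ N)
        = -(QuotientAddGroup.mk x : G ⧸ N) := by
      have hms : (QuotientAddGroup.mk (c + c - x) : G ⧸ N)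
          = QuotientAddGroup.mk (c + c) - QuotientAddGroup.mk x :=
        map_sub (QuotientAddGroup.mk' N) _ _
      rw [hms, hN2c, zero_sub]
    have hne : (QuotientAddGroup.mk x : G ⧸ N) ≠ -(QuotientAddGroup.mk x : G ⧸ N) := by
      intro he
      apply key x hxH
      have h0 : (QuotientAddGroup.mk x : G ⧸ N) + QuotientAddGroup.mk x = 0 :=
        add_eq_zero_iff_eq_neg.mpr he
      have h4 : (QuotientAddGroup.mk (x + x) : G ⧸ N) = 0 := by
        have : (QuotientAddGroup.mk (x + x) : G ⧸ N)
            = QuotientAddGroup.mk x + QuotientAddGroup.mk x :=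
          map_add (QuotientAddGroup.mk' N) _ _
        rw [this, h0]
      exact (QuotientAddGroup.eq_zero_iff _).mp h4
    have hgx := hg _ hne
    have hxc : χ' x = (if g (QuotientAddGroup.mk x) then f0 else f1) := dif_neg hxH
    have hyc : χ' (c + c - x)
        = (if g (-(QuotientAddGroup.mk x : G ⧸ N)) then f0 else f1) := by
      rw [show χ' (c + c - x)
          = (if g (QuotientAddGroup.mk (c + c - x)) then f0 else f1) from dif_neg hyH, hq]
    have hcontra : (if g (QuotientAddGroup.mk x) then f0 else f1)
        = (if g (-(QuotientAddGroup.mk x : G ⧸ N)) then f0 else f1) := by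
      rw [← hxc, ← hyc, h1, h2]
    cases hb : g (QuotientAddGroup.mk x) <;>
      cases hb' : g (-(QuotientAddGroup.mk x : G ⧸ N)) <;>
      simp [hb, hb'] at hcontra hgx <;> first
        | exact hf01 hcontra
        | exact hf01 hcontra.symm
  -- build the data inside H
  refine ⟨⟨c, hcH⟩, hcC, Subtype.val ⁻¹' S, ⟨i, ?_⟩, ?_, ?_⟩
  · intro x hx
    have hx' := hmono x.val hx
    rwa [show χ' (x : G) = χ x from dif_pos x.2] at hx'
  · intro hb
    apply hnb
    intro U hU
    have hV : Subtype.val ⁻¹' U ∈ nhds (0 : H) :=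
      ContinuousAt.preimage_mem_nhds continuous_subtype_val.continuousAt (by simpa using hU)
    obtain ⟨F', hF1, hF2⟩ := hb _ hV
    refine ⟨Subtype.val '' F', hF1.image _, ?_⟩
    intro s hs
    have hsH : s ∈ H := hSH hs
    have hmem := hF2 (show (⟨s, hsH⟩ : H) ∈ Subtype.val ⁻¹' S from hs)
    simp only [Set.mem_iUnion, Set.mem_image, exists_prop] at hmem
    obtain ⟨p, hp, u, hu, hpu⟩ := hmem
    simp only [Set.mem_iUnion, Set.mem_image, exists_prop]
    exact ⟨p.val, ⟨p, hp, rfl⟩, u.val, hu, congrArg Subtype.val hpu⟩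
  · ext x
    simp only [Set.mem_preimage, Set.mem_image]
    constructor
    · intro hx
      refine ⟨⟨c, hcH⟩ + ⟨c, hcH⟩ - x, ?_, by abel⟩
      show ((⟨c, hcH⟩ + ⟨c, hcH⟩ - x : H) : G) ∈ S
      exact hinv _ hx
    · rintro ⟨y, hy, rfl⟩
      show ((⟨c, hcH⟩ + ⟨c, hcH⟩ - y : H) : G) ∈ S
      exact hinv _ hy
end
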